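/- Let S(G, g, R, ·) and S(G', g', R', ·) be cone-represented set families in ℝ^n for the same closed convex cone K ⊆ ℝ^l, let P₁, P₂ ∈ ℝ^{n×m} and p̄, q̄ ∈ ℝ^n. Suppose λ, ν ∈ K* satisfy ‖R Gᵀ λ‖₂ ≤ 1 and R Gᵀ λ = −R' G'ᵀ ν; set Y = −⟨λ, G Rᵀ (p̄ − q̄) + g⟩ − ⟨ν, g'⟩ and w = −(P₁ − P₂)ᵀ R Gᵀ λ. Let ε ∈ (0, 1), let γ ∈ ℝ satisfy Φ(γ) = 1 − ε for the standard Gaussian CDF Φ, let s > 0, and let μ be a probability measure on ℝ^m whose pushforward under v ↦ ⟨w, v⟩ is the real Gaussian measure with mean 0 and variance s². If Y ≥ γ s, then μ({v ∈ ℝ^m : S(G, g, R, p̄ + P₁ v) ∩ S(G', g', R', q̄ + P₂ v) = ∅}) ≥ 1 − ε. -/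

import Mathlib

open Matrix MeasureTheory ProbabilityTheory

/-- Euclidean (ℓ2) norm on `Fin m → ℝ`. -/
noncomputable def e2norm {m : ℕ} (x : Fin m → ℝ) : ℝ := Real.sqrt (∑ i, (x i) ^ 2)

/-- Dual cone of a set `K ⊆ ℝ^l`. -/
def dualCone {l : ℕ} (K : Set (Fin l → ℝ)) : Set (Fin l → ℝ) :=
  {y | ∀ x ∈ K, 0 ≤ y ⬝ᵥ x}

/-- The cone-represented set `S(G, g, R, p) = {z | ∃ y, g − G y ∈ K, z = R y + p}`. -/
def coneSet {n l : ℕ} (K : Set (Fin l → ℝ)) (G : Matrix (Fin l) (Fin n) ℝ)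
    (g : Fin l → ℝ) (R : Matrix (Fin n) (Fin n) ℝ) (p : Fin n → ℝ) : Set (Fin n → ℝ) :=
  {z | ∃ y, g - G *ᵥ y ∈ K ∧ z = R *ᵥ y + p}

lemma aux_dot_mulVec {k n : ℕ} (M : Matrix (Fin n) (Fin k) ℝ) (u : Fin n → ℝ) (x : Fin k → ℝ) :
    u ⬝ᵥ (M *ᵥ x) = (Mᵀ *ᵥ u) ⬝ᵥ x := by
  rw [Matrix.dotProduct_mulVec, Matrix.mulVec_transpose]

lemma aux_orth {n : ℕ} (R : Matrix (Fin n) (Fin n) ℝ) (hRtR : Rᵀ * R = 1)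
    (u x : Fin n → ℝ) : (R *ᵥ u) ⬝ᵥ (R *ᵥ x) = u ⬝ᵥ x := by
  rw [Matrix.dotProduct_mulVec, ← Matrix.vecMul_transpose, Matrix.vecMul_vecMul, hRtR,
    Matrix.vecMul_one]

lemma gaussian_symm (γ ε : ℝ) (hγ : cdf (gaussianReal 0 1) γ = 1 - ε) :
    gaussianReal 0 1 (Set.Iic (-γ)) = ENNReal.ofReal ε := by
  set N := gaussianReal 0 1 with hN
  have hac : N ≪ volume := gaussianReal_absolutelyContinuous 0 one_ne_zero
  have : NullSingletonClass N := ⟨fun x => hac (measure_singleton x)⟩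
  have hneg : N.map (fun x => -x) = N := by
    have h := gaussianReal_map_const_mul (μ := 0) (v := 1) (-1)
    have h1 : ((⟨(-1 : ℝ)^2, sq_nonneg _⟩ : NNReal) * 1) = 1 := by
      ext; norm_num
    rw [show NNReal.mk ((-1 : ℝ) ^ 2) (sq_nonneg _) * 1 = 1 from h1] at h
    simpa [neg_one_mul] using h
  have hmeas : Measurable fun x : ℝ => -x := measurable_neg
  have h1 : N (Set.Iic (-γ)) = N (Set.Ici γ) := by
    conv_lhs => rw [← hneg]
    rw [Measure.map_apply hmeas measurableSet_Iic]
    congr 1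
    ext x
    simp
  have h2 : N (Set.Ici γ) = N (Set.Ioi γ) := (measure_congr (Ioi_ae_eq_Ici (μ := N))).symm
  have h3 : N (Set.Ioi γ) = 1 - N (Set.Iic γ) := by
    rw [← Set.compl_Iic]
    exact prob_compl_eq_one_sub measurableSet_Iic
  have h4 : N (Set.Iic γ) = ENNReal.ofReal (1 - ε) := by
    rw [← ofReal_cdf, hγ]
  have hε0 : 0 ≤ ε := by
    have := cdf_le_one N γ
    rw [hγ] at this; linarith
  have hε1 : ε ≤ 1 := by
    have := cdf_nonneg N γ
    rw [hγ] at this; linarith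
  rw [h1, h2, h3, h4]
  rw [← ENNReal.ofReal_one, ← ENNReal.ofReal_sub _ (by linarith : (0:ℝ) ≤ 1 - ε)]
  norm_num

theorem gaussian_chance_constrained_collision_avoidance {n l m : ℕ} (K : Set (Fin l → ℝ))
    (hKclosed : IsClosed K) (hKconv : Convex ℝ K)
    (hKcone : ∀ c : ℝ, 0 < c → ∀ x ∈ K, c • x ∈ K)
    (hKint : (interior K).Nonempty)
    (G G' : Matrix (Fin l) (Fin n) ℝ) (g g' : Fin l → ℝ)
    (R R' : Matrix (Fin n) (Fin n) ℝ)
    (hR : R * Rᵀ = 1) (hR' : R' * R'ᵀ = 1)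
    (P₁ P₂ : Matrix (Fin n) (Fin m) ℝ) (pbar qbar : Fin n → ℝ)
    (lam nu : Fin l → ℝ) (hlam : lam ∈ dualCone K) (hnu : nu ∈ dualCone K)
    (hnorm : e2norm (R *ᵥ (Gᵀ *ᵥ lam)) ≤ 1)
    (heq : R *ᵥ (Gᵀ *ᵥ lam) = -(R' *ᵥ (G'ᵀ *ᵥ nu)))
    (Y : ℝ) (hY : Y = -(lam ⬝ᵥ (G *ᵥ (Rᵀ *ᵥ (pbar - qbar)) + g)) - nu ⬝ᵥ g')
    (w : Fin m → ℝ) (hw : w = -((P₁ - P₂)ᵀ *ᵥ (R *ᵥ (Gᵀ *ᵥ lam))))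
    {ε : ℝ} (hε : ε ∈ Set.Ioo (0 : ℝ) 1)
    (γ : ℝ) (hγ : cdf (gaussianReal 0 1) γ = 1 - ε)
    {s : ℝ} (hs : 0 < s)
    (μ : Measure (Fin m → ℝ)) [IsProbabilityMeasure μ]
    (hpush : μ.map (fun v => w ⬝ᵥ v) = gaussianReal 0 ⟨s ^ 2, sq_nonneg s⟩)
    (htight : γ * s ≤ Y) :
    ENNReal.ofReal (1 - ε) ≤
      μ {v : Fin m → ℝ |
        coneSet K G g R (pbar + P₁ *ᵥ v) ∩ coneSet K G' g' R' (qbar + P₂ *ᵥ v) = ∅} := by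
  set a := R *ᵥ (Gᵀ *ᵥ lam) with ha
  have hRtR : Rᵀ * R = 1 := mul_eq_one_comm.mp hR
  have hRtR' : R'ᵀ * R' = 1 := mul_eq_one_comm.mp hR'
  -- Step 1: set inclusion
  have hsub : {v : Fin m → ℝ | -Y < w ⬝ᵥ v} ⊆
      {v : Fin m → ℝ |
        coneSet K G g R (pbar + P₁ *ᵥ v) ∩ coneSet K G' g' R' (qbar + P₂ *ᵥ v) = ∅} := by
    intro v hv
    rw [Set.mem_setOf_eq, Set.eq_empty_iff_forall_notMem]
    rintro z ⟨⟨y, hy, hz⟩, ⟨y', hy', hz'⟩⟩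
    have h1 : 0 ≤ lam ⬝ᵥ (g - G *ᵥ y) := hlam _ hy
    have h2 : 0 ≤ nu ⬝ᵥ (g' - G' *ᵥ y') := hnu _ hy'
    have hzy : R *ᵥ y = z - (pbar + P₁ *ᵥ v) := by rw [hz]; abel
    have hzy' : R' *ᵥ y' = z - (qbar + P₂ *ᵥ v) := by rw [hz']; abel
    have e1 : lam ⬝ᵥ (G *ᵥ y) = a ⬝ᵥ (z - (pbar + P₁ *ᵥ v)) := by
      rw [aux_dot_mulVec, ha, ← hzy, aux_orth R hRtR]
    have e2 : nu ⬝ᵥ (G' *ᵥ y') = (-a) ⬝ᵥ (z - (qbar + P₂ *ᵥ v)) := by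
      have hb : R' *ᵥ (G'ᵀ *ᵥ nu) = -a := by rw [heq]; simp
      rw [aux_dot_mulVec, ← aux_orth R' hRtR' (G'ᵀ *ᵥ nu) y', hb, hzy']
    have e3 : lam ⬝ᵥ (G *ᵥ (Rᵀ *ᵥ (pbar - qbar))) = a ⬝ᵥ (pbar - qbar) := by
      rw [aux_dot_mulVec, aux_dot_mulVec, Matrix.transpose_transpose]
    have e4 : w ⬝ᵥ v = -(a ⬝ᵥ ((P₁ - P₂) *ᵥ v)) := by
      rw [hw, neg_dotProduct, aux_dot_mulVec]
    rw [dotProduct_sub] at h1 h2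
    rw [e1] at h1
    rw [e2] at h2
    have hYv : Y = -(a ⬝ᵥ (pbar - qbar)) - lam ⬝ᵥ g - nu ⬝ᵥ g' := by
      rw [hY, dotProduct_add, e3]; ring
    have expand1 : a ⬝ᵥ (z - (pbar + P₁ *ᵥ v)) =
        a ⬝ᵥ z - a ⬝ᵥ pbar - a ⬝ᵥ (P₁ *ᵥ v) := by
      rw [dotProduct_sub, dotProduct_add]; ring
    have expand2 : (-a) ⬝ᵥ (z - (qbar + P₂ *ᵥ v)) =
        -(a ⬝ᵥ z) + a ⬝ᵥ qbar + a ⬝ᵥ (P₂ *ᵥ v) := by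
      rw [neg_dotProduct, dotProduct_sub, dotProduct_add]; ring
    have expand3 : a ⬝ᵥ ((P₁ - P₂) *ᵥ v) = a ⬝ᵥ (P₁ *ᵥ v) - a ⬝ᵥ (P₂ *ᵥ v) := by
      rw [Matrix.sub_mulVec, dotProduct_sub]
    have expand4 : a ⬝ᵥ (pbar - qbar) = a ⬝ᵥ pbar - a ⬝ᵥ qbar := dotProduct_sub _ _ _
    rw [Set.mem_setOf_eq, e4, expand3] at hv
    rw [expand1] at h1
    rw [expand2] at h2
    rw [expand4] at hYv
    linarith
  -- Step 2: measure computation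
  have hf : Measurable fun v : Fin m → ℝ => w ⬝ᵥ v := by
    simp only [dotProduct]
    exact Finset.univ.measurable_sum fun i _ => (measurable_pi_apply i).const_mul _
  have key : μ {v : Fin m → ℝ | -Y < w ⬝ᵥ v}
      = gaussianReal 0 ⟨s ^ 2, sq_nonneg s⟩ (Set.Ioi (-Y)) := by
    rw [← hpush, Measure.map_apply hf measurableSet_Ioi]
    rfl
  have hmono2 : gaussianReal 0 ⟨s ^ 2, sq_nonneg s⟩ (Set.Ioi (-(γ * s)))
      ≤ gaussianReal 0 ⟨s ^ 2, sq_nonneg s⟩ (Set.Ioi (-Y)) :=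
    measure_mono (Set.Ioi_subset_Ioi (by linarith))
  have hmap : gaussianReal 0 ⟨s ^ 2, sq_nonneg s⟩
      = (gaussianReal 0 1).map (fun x => s * x) := by
    have h := gaussianReal_map_const_mul (μ := 0) (v := 1) s
    rw [mul_zero, mul_one] at h
    exact h.symm
  have hpre : (fun x : ℝ => s * x) ⁻¹' (Set.Ioi (-(γ * s))) = Set.Ioi (-γ) := by
    ext x
    simp only [Set.mem_preimage, Set.mem_Ioi]
    constructor
    · intro h; nlinarith
    · intro h; nlinarith
  have hval : gaussianReal 0 ⟨s ^ 2, sq_nonneg s⟩ (Set.Ioi (-(γ * s)))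
      = ENNReal.ofReal (1 - ε) := by
    rw [hmap, Measure.map_apply (measurable_const_mul s) measurableSet_Ioi, hpre,
      ← Set.compl_Iic, prob_compl_eq_one_sub measurableSet_Iic,
      gaussian_symm γ ε hγ]
    rw [← ENNReal.ofReal_one, ← ENNReal.ofReal_sub _ hε.1.le]
  calc ENNReal.ofReal (1 - ε) = gaussianReal 0 ⟨s ^ 2, sq_nonneg s⟩ (Set.Ioi (-(γ * s))) :=
        hval.symm
    _ ≤ gaussianReal 0 ⟨s ^ 2, sq_nonneg s⟩ (Set.Ioi (-Y)) := hmono2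
    _ = μ {v : Fin m → ℝ | -Y < w ⬝ᵥ v} := key.symm
    _ ≤ _ := measure_mono hsub
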